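/- Let n, m be positive integers, let M₁ = [[A₁, B₁],[B₁', C₁]] and M₂ = [[A₂, B₂],[B₂', C₂]] be real symmetric positive semidefinite (n+m)×(n+m) matrices partitioned so that Aᵢ is n×n and Cᵢ is m×m, and let λ ∈ [0,1]. Write M_λ = λM₁ + (1−λ)M₂ = [[A_λ, B_λ],[B_λ', C_λ]] with the same partition. Then for any matrices W₁, W₂, W_λ with C₁W₁C₁ = C₁, C₂W₂C₂ = C₂ and C_λW_λC_λ = C_λ, one has λ(A₁ − B₁W₁B₁') + (1−λ)(A₂ − B₂W₂B₂') ⪯ A_λ − B_λ W_λ B_λ'. In other words, the Schur complement of a positive semidefinite matrix is a concave function of the matrix. -/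

import Mathlib

open Matrix

private lemma psd_smul' {k : Type*} [Fintype k] {M : Matrix k k ℝ} (hM : M.PosSemidef) {c : ℝ}
    (hc : 0 ≤ c) : (c • M).PosSemidef := by
  refine Matrix.PosSemidef.of_dotProduct_mulVec_nonneg ?_ ?_
  · unfold Matrix.IsHermitian
    rw [conjTranspose_smul, hM.1.eq, star_trivial]
  · intro x
    have := hM.dotProduct_mulVec_nonneg x
    simp only [smul_mulVec, dotProduct_smul, smul_eq_mul, star_trivial] at *
    positivity

private lemma ker_lemma' {n m : ℕ} (A : Matrix (Fin n) (Fin n) ℝ) (B : Matrix (Fin n) (Fin m) ℝ)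
    (C : Matrix (Fin m) (Fin m) ℝ)
    (hM : (fromBlocks A B Bᵀ C).PosSemidef) (N : Matrix (Fin m) (Fin m) ℝ)
    (hN : C * N = 0) : B * N = 0 := by
  ext i j
  set v : Fin m → ℝ := fun k => N k j with hv
  have hCv : C *ᵥ v = 0 := by
    ext i'
    have := congrFun (congrFun hN i') j
    simpa [Matrix.mul_apply, Matrix.mulVec, dotProduct] using this
  have key : ∀ x : Fin n → ℝ, x ⬝ᵥ (B *ᵥ v) = 0 := by
    intro x
    set a := x ⬝ᵥ (A *ᵥ x) with hadef
    set b := x ⬝ᵥ (B *ᵥ v) with hbdef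
    have ha : 0 ≤ a := by
      have := hM.dotProduct_mulVec_nonneg (Sum.elim x 0)
      simpa [fromBlocks_mulVec, sumElim_dotProduct_sumElim] using this
    have hq : ∀ s : ℝ, 0 ≤ s^2 * a + 2 * s * b := by
      intro s
      have := hM.dotProduct_mulVec_nonneg (Sum.elim (s • x) v)
      simp only [star_trivial, fromBlocks_mulVec, sumElim_dotProduct_sumElim, hCv,
        Sum.elim_comp_inl, Sum.elim_comp_inr, mulVec_smul, add_zero, dotProduct_add,
        dotProduct_smul, smul_dotProduct, dotProduct_zero, smul_eq_mul] at this
      have hsym : v ⬝ᵥ (Bᵀ *ᵥ x) = b := by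
        rw [hbdef, Matrix.dotProduct_mulVec, Matrix.vecMul_transpose, dotProduct_comm]
      rw [hsym] at this
      nlinarith [this]
    set t := b / (a + 1) with htdef
    have h1 : (0:ℝ) < a + 1 := by linarith
    have hb' : b = t * (a + 1) := by rw [htdef, div_mul_cancel₀ b h1.ne']
    have hqt := hq (-t)
    rw [hb'] at hqt
    have ht2 : t ^ 2 * (a + 2) ≤ 0 := by nlinarith [hqt]
    have ht0 : t = 0 := by nlinarith [sq_nonneg t]
    rw [hb', ht0, zero_mul]
  have := key (Pi.single i 1)
  simpa [Matrix.mul_apply, Matrix.mulVec, dotProduct, Pi.single_apply] using this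

private lemma absorb' {n m : ℕ} {A : Matrix (Fin n) (Fin n) ℝ} {B : Matrix (Fin n) (Fin m) ℝ}
    {C W : Matrix (Fin m) (Fin m) ℝ}
    (hM : (fromBlocks A B Bᵀ C).PosSemidef) (hW : C * W * C = C) :
    B * W * C = B := by
  have h := ker_lemma' A B C hM (W * C - 1)
    (by rw [Matrix.mul_sub, Matrix.mul_one, ← Matrix.mul_assoc, hW, sub_self])
  rw [Matrix.mul_sub, Matrix.mul_one, sub_eq_zero] at h
  rw [Matrix.mul_assoc]; exact h

private lemma schur_identity' {n m : ℕ} (A : Matrix (Fin n) (Fin n) ℝ)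
    (B : Matrix (Fin n) (Fin m) ℝ)
    (C W : Matrix (Fin m) (Fin m) ℝ) (Y : Matrix (Fin m) (Fin n) ℝ)
    (h1 : C * W * Bᵀ = Bᵀ) (h2 : B * Wᵀ * C = B) :
    (fromRows (1 : Matrix (Fin n) (Fin n) ℝ) Y)ᵀ * (fromBlocks A B Bᵀ C) *
      (fromRows (1 : Matrix (Fin n) (Fin n) ℝ) Y)
    = (A - B * W * Bᵀ) + (Y + W * Bᵀ)ᵀ * C * (Y + W * Bᵀ) := by
  have h1' : C * (W * Bᵀ) = Bᵀ := by rw [← Matrix.mul_assoc, h1]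
  have expand : (Y + W * Bᵀ)ᵀ * C * (Y + W * Bᵀ)
      = Yᵀ*C*Y + Yᵀ*(C*(W*Bᵀ)) + (B*Wᵀ*C)*Y + (B*Wᵀ*C)*(W*Bᵀ) := by
    rw [transpose_add, transpose_mul, transpose_transpose]
    simp only [Matrix.add_mul, Matrix.mul_add, Matrix.mul_assoc, Matrix.mul_one,
      Matrix.one_mul]; abel
  rw [transpose_fromRows, transpose_one, Matrix.mul_assoc, fromBlocks_mul_fromRows,
    fromCols_mul_fromRows, expand, h1', h2]
  simp only [Matrix.add_mul, Matrix.mul_add, Matrix.mul_assoc, Matrix.mul_one,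
    Matrix.one_mul, sub_eq_add_neg]; abel

/-- generalized-inverse absorption facts -/
private lemma absorption {n m : ℕ} {A : Matrix (Fin n) (Fin n) ℝ} {B : Matrix (Fin n) (Fin m) ℝ}
    {C W : Matrix (Fin m) (Fin m) ℝ}
    (hM : (fromBlocks A B Bᵀ C).PosSemidef) (hW : C * W * C = C) :
    C * W * Bᵀ = Bᵀ ∧ B * Wᵀ * C = B := by
  have hCt : Cᵀ = C := by
    have hh := (isHermitian_fromBlocks_iff.mp hM.1).2.2.2
    rw [← conjTranspose_eq_transpose_of_trivial]; exact hh.eq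
  have hWt : C * Wᵀ * C = C := by
    have := congrArg Matrix.transpose hW
    simpa [transpose_mul, hCt, Matrix.mul_assoc] using this
  have h2 : B * Wᵀ * C = B := absorb' hM hWt
  have h1 : C * W * Bᵀ = Bᵀ := by
    have := congrArg Matrix.transpose h2
    simpa [transpose_mul, transpose_transpose, hCt, Matrix.mul_assoc] using this
  exact ⟨h1, h2⟩

theorem schur_complement_concave
    (n m : ℕ) (hn : 0 < n) (hm : 0 < m)
    (A₁ A₂ : Matrix (Fin n) (Fin n) ℝ)
    (B₁ B₂ : Matrix (Fin n) (Fin m) ℝ)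
    (C₁ C₂ : Matrix (Fin m) (Fin m) ℝ)
    (lam : ℝ) (hlam0 : 0 ≤ lam) (hlam1 : lam ≤ 1)
    (W₁ W₂ Wlam : Matrix (Fin m) (Fin m) ℝ)
    (hM₁ : (Matrix.fromBlocks A₁ B₁ B₁ᵀ C₁).PosSemidef)
    (hM₂ : (Matrix.fromBlocks A₂ B₂ B₂ᵀ C₂).PosSemidef)
    (hW₁ : C₁ * W₁ * C₁ = C₁) (hW₂ : C₂ * W₂ * C₂ = C₂)
    (hWlam : (lam • C₁ + (1 - lam) • C₂) * Wlam * (lam • C₁ + (1 - lam) • C₂)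
      = lam • C₁ + (1 - lam) • C₂) :
    (((lam • A₁ + (1 - lam) • A₂) -
        (lam • B₁ + (1 - lam) • B₂) * Wlam * (lam • B₁ + (1 - lam) • B₂)ᵀ) -
      (lam • (A₁ - B₁ * W₁ * B₁ᵀ) + (1 - lam) • (A₂ - B₂ * W₂ * B₂ᵀ))).PosSemidef := by
  have hlam1' : (0:ℝ) ≤ 1 - lam := by linarith
  set Al := lam • A₁ + (1 - lam) • A₂ with hAl
  set Bl := lam • B₁ + (1 - lam) • B₂ with hBl
  set Cl := lam • C₁ + (1 - lam) • C₂ with hCl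
  have hMl_eq : fromBlocks Al Bl Blᵀ Cl
      = lam • fromBlocks A₁ B₁ B₁ᵀ C₁ + (1 - lam) • fromBlocks A₂ B₂ B₂ᵀ C₂ := by
    have hBt : Blᵀ = lam • B₁ᵀ + (1 - lam) • B₂ᵀ := by
      rw [hBl, transpose_add, transpose_smul, transpose_smul]
    rw [fromBlocks_smul, fromBlocks_smul, fromBlocks_add, hBt]
  have hMl : (fromBlocks Al Bl Blᵀ Cl).PosSemidef := by
    rw [hMl_eq]
    exact (psd_smul' hM₁ hlam0).add (psd_smul' hM₂ hlam1')
  obtain ⟨h1l, h2l⟩ := absorption hMl hWlam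
  obtain ⟨h11, h21⟩ := absorption hM₁ hW₁
  obtain ⟨h12, h22⟩ := absorption hM₂ hW₂
  set Y : Matrix (Fin m) (Fin n) ℝ := -(Wlam * Blᵀ) with hY
  set U := fromRows (1 : Matrix (Fin n) (Fin n) ℝ) Y with hU
  have idl := schur_identity' Al Bl Cl Wlam Y h1l h2l
  have id1 := schur_identity' A₁ B₁ C₁ W₁ Y h11 h21
  have id2 := schur_identity' A₂ B₂ C₂ W₂ Y h12 h22
  have hY0 : Y + Wlam * Blᵀ = 0 := by rw [hY]; exact neg_add_cancel _
  rw [hY0] at idl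
  simp only [transpose_zero, Matrix.zero_mul, Matrix.mul_zero, add_zero] at idl
  -- split
  have hsplit : Uᵀ * fromBlocks Al Bl Blᵀ Cl * U
      = lam • (Uᵀ * fromBlocks A₁ B₁ B₁ᵀ C₁ * U)
        + (1 - lam) • (Uᵀ * fromBlocks A₂ B₂ B₂ᵀ C₂ * U) := by
    rw [hMl_eq]
    simp only [Matrix.mul_add, Matrix.add_mul, Matrix.mul_smul, Matrix.smul_mul]
  set P₁ := (Y + W₁ * B₁ᵀ)ᵀ * C₁ * (Y + W₁ * B₁ᵀ) with hP1
  set P₂ := (Y + W₂ * B₂ᵀ)ᵀ * C₂ * (Y + W₂ * B₂ᵀ) with hP2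
  have hSl : Al - Bl * Wlam * Blᵀ
      = lam • ((A₁ - B₁ * W₁ * B₁ᵀ) + P₁) + (1 - lam) • ((A₂ - B₂ * W₂ * B₂ᵀ) + P₂) := by
    rw [← idl, hsplit, id1, id2]
  have hD : (Al - Bl * Wlam * Blᵀ)
      - (lam • (A₁ - B₁ * W₁ * B₁ᵀ) + (1 - lam) • (A₂ - B₂ * W₂ * B₂ᵀ))
      = lam • P₁ + (1 - lam) • P₂ := by
    rw [hSl]
    simp only [smul_add]
    abel
  rw [hD]
  have hC₁ : C₁.PosSemidef := by
    have h := hM₁.submatrix (Sum.inr : Fin m → Fin n ⊕ Fin m)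
    have he : (fromBlocks A₁ B₁ B₁ᵀ C₁).submatrix (Sum.inr : Fin m → Fin n ⊕ Fin m)
        (Sum.inr : Fin m → Fin n ⊕ Fin m) = C₁ := by
      ext i j; simp [Matrix.submatrix, fromBlocks]
    rwa [he] at h
  have hC₂ : C₂.PosSemidef := by
    have h := hM₂.submatrix (Sum.inr : Fin m → Fin n ⊕ Fin m)
    have he : (fromBlocks A₂ B₂ B₂ᵀ C₂).submatrix (Sum.inr : Fin m → Fin n ⊕ Fin m)
        (Sum.inr : Fin m → Fin n ⊕ Fin m) = C₂ := by
      ext i j; simp [Matrix.submatrix, fromBlocks]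
    rwa [he] at h
  have hP₁psd : P₁.PosSemidef := by
    have := hC₁.conjTranspose_mul_mul_same (Y + W₁ * B₁ᵀ)
    rwa [conjTranspose_eq_transpose_of_trivial] at this
  have hP₂psd : P₂.PosSemidef := by
    have := hC₂.conjTranspose_mul_mul_same (Y + W₂ * B₂ᵀ)
    rwa [conjTranspose_eq_transpose_of_trivial] at this
  exact (psd_smul' hP₁psd hlam0).add (psd_smul' hP₂psd hlam1')
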